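/- Let G be a group in which every conjugacy class is finite (an FC-group). Then the set of torsion elements of G forms a subgroup of G. -/

import Mathlib

section Aux

variable {K : Type*} [Group K]

open scoped commutatorElement

/-- Conjugation by `g * z` equals conjugation by `g` when `z` is central. -/
private lemma conj_mul_central (g z X : K) (hz : ∀ u : K, z * u = u * z) :
    (g * z) * X * (g * z)⁻¹ = g * X * g⁻¹ := by
  calc (g * z) * X * (g * z)⁻¹ = g * (z * X) * (z⁻¹ * g⁻¹) := by
        rw [mul_inv_rev]; group
    _ = g * (X * z) * (z⁻¹ * g⁻¹) := by rw [hz X]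
    _ = g * X * g⁻¹ := by group

private lemma commutator_mul_central_left (g z h : K) (hz : ∀ u : K, z * u = u * z) :
    ⁅g * z, h⁆ = ⁅g, h⁆ := by
  rw [commutatorElement_def, commutatorElement_def, conj_mul_central g z h hz]

private lemma commutator_mul_central (g h z w : K)
    (hz : ∀ u : K, z * u = u * z) (hw : ∀ u : K, w * u = w * u ∧ w * u = u * w) :
    ⁅g * z, h * w⁆ = ⁅g, h⁆ := by
  rw [commutator_mul_central_left g z (h * w) hz, ← commutatorElement_inv,
    commutator_mul_central_left h w g (fun u => (hw u).2), commutatorElement_inv]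

/-- If the center has finite index, the set of commutators is finite. -/
private lemma finite_commutatorSet_of_finiteIndex_center
    [hfi : (Subgroup.center K).FiniteIndex] : Finite (commutatorSet K) := by
  set Z := Subgroup.center K
  haveI : Finite (K ⧸ Z) := Subgroup.finite_quotient_of_finiteIndex (H := Z)
  set F : (K ⧸ Z) × (K ⧸ Z) → K := fun p => ⁅p.1.out, p.2.out⁆ with hF
  have hsub : commutatorSet K ⊆ Set.range F := by
    rintro x ⟨g, h, rfl⟩
    refine ⟨(QuotientGroup.mk g, QuotientGroup.mk h), ?_⟩
    obtain ⟨⟨z, hzZ⟩, hgz⟩ := QuotientGroup.mk_out_eq_mul Z g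
    obtain ⟨⟨w, hwZ⟩, hhw⟩ := QuotientGroup.mk_out_eq_mul Z h
    have hz : ∀ u : K, z * u = u * z := fun u => (Subgroup.mem_center_iff.mp hzZ u).symm
    have hw : ∀ u : K, w * u = u * w := fun u => (Subgroup.mem_center_iff.mp hwZ u).symm
    simp only [hF, hgz, hhw]
    exact commutator_mul_central g h z w hz (fun u => ⟨rfl, hw u⟩)
  exact Set.Finite.to_subtype ((Set.finite_range F).subset hsub)

end Aux

/-- From a finite conjugacy class, the centralizer has finite index. -/
private lemma finiteIndex_centralizer {G : Type*} [Group G] (a : G)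
    (h : {h : G | ∃ x : G, x⁻¹ * a * x = h}.Finite) :
    (Subgroup.centralizer {a}).FiniteIndex := by
  haveI := h.to_subtype
  set S := {h : G | ∃ x : G, x⁻¹ * a * x = h}
  set C := Subgroup.centralizer ({a} : Set G)
  have wd : ∀ x y : G, (QuotientGroup.mk x : G ⧸ C) = QuotientGroup.mk y →
      x * a * x⁻¹ = y * a * y⁻¹ := by
    intro x y hxy
    have hmem : x⁻¹ * y ∈ C := QuotientGroup.eq.mp hxy
    have hcomm : a * (x⁻¹ * y) = (x⁻¹ * y) * a :=
      (Subgroup.mem_centralizer_singleton_iff.mp hmem).symm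
    calc x * a * x⁻¹ = x * (a * (x⁻¹ * y)) * y⁻¹ := by group
      _ = x * ((x⁻¹ * y) * a) * y⁻¹ := by rw [hcomm]
      _ = y * a * y⁻¹ := by group
  have : Finite (G ⧸ C) := by
    refine Finite.of_injective (fun q : G ⧸ C => (⟨q.out * a * q.out⁻¹,
      ⟨q.out⁻¹, by rw [inv_inv]⟩⟩ : S)) ?_
    intro q₁ q₂ hq
    have h1 : q₁.out * a * q₁.out⁻¹ = q₂.out * a * q₂.out⁻¹ := congrArg Subtype.val hq
    have h2 : q₁.out⁻¹ * q₂.out ∈ C := by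
      apply Subgroup.mem_centralizer_singleton_iff.mpr
      refine Eq.symm ?_
      calc a * (q₁.out⁻¹ * q₂.out)
          = q₁.out⁻¹ * (q₁.out * a * q₁.out⁻¹) * q₂.out := by group
        _ = q₁.out⁻¹ * (q₂.out * a * q₂.out⁻¹) * q₂.out := by rw [h1]
        _ = (q₁.out⁻¹ * q₂.out) * a := by group
    calc q₁ = QuotientGroup.mk q₁.out := (QuotientGroup.out_eq' q₁).symm
      _ = QuotientGroup.mk q₂.out := QuotientGroup.eq.mpr h2
      _ = q₂ := QuotientGroup.out_eq' q₂
  exact Subgroup.finiteIndex_of_finite_quotient (H := C)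

/-- In an FC-group, the product of two torsion elements is torsion. -/
private lemma mul_isOfFinOrder_of_FC {G : Type*} [Group G]
    (hFC : ∀ g : G, {h : G | ∃ x : G, x⁻¹ * g * x = h}.Finite)
    {a b : G} (ha : IsOfFinOrder a) (hb : IsOfFinOrder b) : IsOfFinOrder (a * b) := by
  set H := Subgroup.closure ({a, b} : Set G)
  have haH : a ∈ H := Subgroup.subset_closure (by simp)
  have hbH : b ∈ H := Subgroup.subset_closure (by simp)
  -- the intersection of the two centralizers has finite index in G
  haveI hCa := finiteIndex_centralizer a (hFC a)
  haveI hCb := finiteIndex_centralizer b (hFC b)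
  set Z := Subgroup.centralizer ({a} : Set G) ⊓ Subgroup.centralizer ({b} : Set G) with hZdef
  haveI : Z.FiniteIndex := inferInstance
  haveI : (Z.subgroupOf H).FiniteIndex := inferInstance
  -- Z ∩ H is contained in the center of H
  have hZle : Z.subgroupOf H ≤ Subgroup.center H := by
    intro z hz
    rw [Subgroup.mem_subgroupOf] at hz
    have hza : a * (z : G) = (z : G) * a :=
      (Subgroup.mem_centralizer_singleton_iff.mp hz.1).symm
    have hzb : b * (z : G) = (z : G) * b :=
      (Subgroup.mem_centralizer_singleton_iff.mp hz.2).symm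
    rw [Subgroup.mem_center_iff]
    intro g
    have hcomm : ∀ x ∈ H, x * (z : G) = (z : G) * x := by
      intro x hx
      induction hx using Subgroup.closure_induction with
      | mem x hx =>
        rcases hx with h | h
        · rw [h]; exact hza
        · rw [h]; exact hzb
      | one => simp
      | mul x y _ _ ihx ihy => rw [mul_assoc, ihy, ← mul_assoc, ihx, mul_assoc]
      | inv x _ ih =>
        calc x⁻¹ * (z : G) = x⁻¹ * (x * (z:G) * x⁻¹) := by rw [ih]; group
          _ = (z : G) * x⁻¹ := by group
    exact Subtype.ext (hcomm (g : G) g.2)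
  haveI : (Subgroup.center H).FiniteIndex := Subgroup.finiteIndex_of_le hZle
  haveI : Finite (commutatorSet H) := finite_commutatorSet_of_finiteIndex_center
  haveI : Finite (_root_.commutator H) := inferInstance
  -- pass to the abelianization of H
  set a' : H := ⟨a, haH⟩
  set b' : H := ⟨b, hbH⟩
  have ha' : IsOfFinOrder a' := by
    obtain ⟨n, hn, hpow⟩ := isOfFinOrder_iff_pow_eq_one.mp ha
    exact isOfFinOrder_iff_pow_eq_one.mpr ⟨n, hn, by ext; simpa⟩
  have hb' : IsOfFinOrder b' := by
    obtain ⟨n, hn, hpow⟩ := isOfFinOrder_iff_pow_eq_one.mp hb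
    exact isOfFinOrder_iff_pow_eq_one.mpr ⟨n, hn, by ext; simpa⟩
  have hab' : IsOfFinOrder (Abelianization.of (a' * b')) :=
    (Abelianization.of.isOfFinOrder ha').mul (Abelianization.of.isOfFinOrder hb')
  obtain ⟨n, hn, hpow⟩ := isOfFinOrder_iff_pow_eq_one.mp hab'
  have hmem : (a' * b') ^ n ∈ _root_.commutator H := by
    rw [← QuotientGroup.eq_one_iff]
    rw [← map_pow] at hpow; exact hpow
  -- the commutator subgroup is finite, so `(a' * b') ^ n` is torsion
  have h1 : IsOfFinOrder (⟨(a' * b') ^ n, hmem⟩ : _root_.commutator H) :=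
    isTorsion_of_finite _
  have h2 : IsOfFinOrder ((a' * b') ^ n) := by
    simpa using (_root_.commutator H).subtype.isOfFinOrder h1
  have h3 : IsOfFinOrder (a' * b') := h2.of_pow hn.ne'
  simpa using H.subtype.isOfFinOrder h3

/-- In an FC-group (all conjugacy classes finite), the torsion elements form a
subgroup. -/
theorem torsion_subgroup_of_FC {G : Type*} [Group G]
    (hFC : ∀ g : G, {h : G | ∃ x : G, x⁻¹ * g * x = h}.Finite) :
    ∃ T : Subgroup G, (T : Set G) = {g : G | IsOfFinOrder g} := by
  refine ⟨{ carrier := {g : G | IsOfFinOrder g}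
            one_mem' := IsOfFinOrder.one
            mul_mem' := fun ha hb => mul_isOfFinOrder_of_FC hFC ha hb
            inv_mem' := fun ha => ha.inv }, rfl⟩
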